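/- arXiv:2207.11273 — 2 statements merged into one kernel-verified Lean document; each statement's English description precedes it below -/
import Mathlib

section
/- Let n ≥ 2 and let w be a word of length n using exactly two letters such that w_i ≠ w_{n-i+1} for all i. Then f(w) = 2n. -/
namespace WordGrid

variable {α : Type*}

/-- The `i`-th row of the grid `G` contains the word `w` (forwards or backwards). -/
def rowC {n : ℕ} (w : Fin n → α) (G : Fin n → Fin n → α) (i : Fin n) : Prop :=
  (∀ j, G i j = w j) ∨ (∀ j, G i j = w j.rev)

/-- The `i`-th column of the grid `G` contains the word `w` (forwards or backwards). -/
def colC {n : ℕ} (w : Fin n → α) (G : Fin n → Fin n → α) (i : Fin n) : Prop :=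
  (∀ j, G j i = w j) ∨ (∀ j, G j i = w j.rev)

/-- The main diagonal of the grid `G` contains the word `w`. -/
def diagC {n : ℕ} (w : Fin n → α) (G : Fin n → Fin n → α) : Prop :=
  (∀ j, G j j = w j) ∨ (∀ j, G j j = w j.rev)

/-- The anti-diagonal of the grid `G` contains the word `w`. -/
def adiagC {n : ℕ} (w : Fin n → α) (G : Fin n → Fin n → α) : Prop :=
  (∀ j, G j j.rev = w j) ∨ (∀ j, G j j.rev = w j.rev)

open Classical in
/-- `f(w,G)`: the number of rows, columns and diagonals of `G` containing `w`. -/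
noncomputable def count {n : ℕ} (w : Fin n → α) (G : Fin n → Fin n → α) : ℕ :=
  {i | rowC w G i}.ncard + {i | colC w G i}.ncard
    + (if diagC w G then 1 else 0) + (if adiagC w G then 1 else 0)

/-- `f(w)`: the maximum of `f(w,G)` over all `n`-grids `G`. -/
noncomputable def fword {n : ℕ} (w : Fin n → α) : ℕ :=
  sSup {m | ∃ G : Fin n → Fin n → α, count w G = m}

lemma ncard_add_le {n : ℕ} {R C : Set (Fin n)} (h : Disjoint R C) :
    R.ncard + C.ncard ≤ n := by
  rw [← Set.ncard_union_eq h (Set.toFinite R) (Set.toFinite C)]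
  have := Set.ncard_le_ncard (Set.subset_univ (R ∪ C)) Set.finite_univ
  simpa [Set.ncard_univ] using this

lemma diag_lem {n : ℕ} {w : Fin n → α} {G : Fin n → Fin n → α}
    (hanti : ∀ i, w i ≠ w i.rev) (hd : diagC w G) (i : Fin n) :
    ¬ (rowC w G i ∧ colC w G i.rev) := by
  rintro ⟨hr | hr, hc | hc⟩ <;> rcases hd with hd | hd
  · exact hanti i ((hc i).symm.trans (hr i.rev))
  · exact hanti i ((hr i).symm.trans (hd i))
  · exact hanti i.rev ((hd i.rev).symm.trans (hc i.rev))
  · exact hanti i ((hr i).symm.trans (hd i))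
  · exact hanti i ((hd i).symm.trans (hr i))
  · exact hanti i.rev ((hc i.rev).symm.trans (hd i.rev))
  · exact hanti i ((hd i).symm.trans (hr i))
  · exact hanti i.rev ((hc i).symm.trans (hr i.rev))

lemma adiag_lem {n : ℕ} {w : Fin n → α} {G : Fin n → Fin n → α}
    (hanti : ∀ i, w i ≠ w i.rev) (hd : adiagC w G) (i : Fin n) :
    ¬ (rowC w G i ∧ colC w G i) := by
  rintro ⟨hr | hr, hc | hc⟩ <;> rcases hd with hd | hd
  · -- row fwd, col fwd, adiag fwd
    exact hanti i ((hd i).symm.trans (hr i.rev))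
  · -- row fwd, col fwd, adiag bwd
    have h := hd i.rev
    simp only [Fin.rev_rev] at h
    exact hanti i (h.symm.trans (hc i.rev))
  · -- row fwd, col bwd, adiag fwd
    exact hanti i ((hr i).symm.trans (hc i))
  · -- row fwd, col bwd, adiag bwd
    exact hanti i ((hr i).symm.trans (hc i))
  · -- row bwd, col fwd, adiag fwd
    exact hanti i ((hc i).symm.trans (hr i))
  · -- row bwd, col fwd, adiag bwd
    exact hanti i ((hc i).symm.trans (hr i))
  · -- row bwd, col bwd, adiag fwd
    have h1 := hc i.rev
    have h2 := hd i.rev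
    simp only [Fin.rev_rev] at h1 h2
    exact hanti i (h1.symm.trans h2)
  · -- row bwd, col bwd, adiag bwd
    have h := hr i.rev
    simp only [Fin.rev_rev] at h
    exact hanti i (h.symm.trans (hd i))

lemma count_le {n : ℕ} (hn : 2 ≤ n) {w : Fin n → α}
    (hanti : ∀ i, w i ≠ w i.rev) (G : Fin n → Fin n → α) :
    count w G ≤ 2 * n := by
  classical
  set R : Set (Fin n) := {i | rowC w G i} with hR
  set C : Set (Fin n) := {i | colC w G i} with hC
  have hRn : R.ncard ≤ n := by
    have := Set.ncard_le_ncard (Set.subset_univ R) Set.finite_univ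
    simpa [Set.ncard_univ] using this
  have hCn : C.ncard ≤ n := by
    have := Set.ncard_le_ncard (Set.subset_univ C) Set.finite_univ
    simpa [Set.ncard_univ] using this
  by_cases hd : diagC w G
  · -- rows and reversed columns are disjoint
    have hdisj : Disjoint R (Fin.rev '' C) := by
      rw [Set.disjoint_left]
      rintro a ha ⟨c, hc, rfl⟩
      exact diag_lem hanti hd c.rev ⟨ha, by rw [Fin.rev_rev]; exact hc⟩
    have himg : (Fin.rev '' C).ncard = C.ncard :=
      Set.ncard_image_of_injective C Fin.rev_injective
    have hsum : R.ncard + C.ncard ≤ n := by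
      have := ncard_add_le hdisj
      omega
    unfold count
    rw [← hR, ← hC]
    have h1 : (if diagC w G then 1 else 0) ≤ 1 := by split <;> omega
    have h2 : (if adiagC w G then 1 else 0) ≤ 1 := by split <;> omega
    omega
  · by_cases ha : adiagC w G
    · have hdisj : Disjoint R C := by
        rw [Set.disjoint_left]
        intro a haR haC
        exact adiag_lem hanti ha a ⟨haR, haC⟩
      have hsum : R.ncard + C.ncard ≤ n := ncard_add_le hdisj
      unfold count
      rw [← hR, ← hC]
      have h2 : (if adiagC w G then 1 else 0) ≤ 1 := by split <;> omega
      simp only [hd, if_false]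
      omega
    · unfold count
      rw [← hR, ← hC]
      simp only [hd, ha, if_false]
      omega

lemma exists_grid {n : ℕ} (hn : 2 ≤ n) {w : Fin n → α}
    {A M : α} (hAM : A ≠ M) (htwo : ∀ i, w i = A ∨ w i = M)
    (hanti : ∀ i, w i ≠ w i.rev) :
    ∃ G : Fin n → Fin n → α, count w G = 2 * n := by
  classical
  -- w takes both values
  have hnA : ∀ i, w i ≠ A → w i = M := fun i h => (htwo i).resolve_left h
  have hnM : ∀ i, w i ≠ M → w i = A := fun i h => (htwo i).resolve_right h
  have hz : (0 : ℕ) < n := by omega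
  set z : Fin n := ⟨0, hz⟩ with hzdef
  obtain ⟨iA, hiA⟩ : ∃ i, w i = A := by
    rcases htwo z with h | h
    · exact ⟨z, h⟩
    · refine ⟨z.rev, hnM _ fun hM => hanti z ?_⟩
      rw [h, hM]
  obtain ⟨iM, hiM⟩ : ∃ i, w i = M := by
    rcases htwo z with h | h
    · refine ⟨z.rev, hnA _ fun hA => hanti z ?_⟩
      rw [h, hA]
    · exact ⟨z, h⟩
  refine ⟨fun i j => if w i = A then w j else w j.rev, ?_⟩
  have hrow : ∀ i, rowC w (fun i j => if w i = A then w j else w j.rev) i := by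
    intro i
    by_cases h : w i = A
    · left; intro j; simp [h]
    · right; intro j; simp [h]
  have hcol : ∀ i, colC w (fun i j => if w i = A then w j else w j.rev) i := by
    intro j
    by_cases h : w j = A
    · left
      intro i
      by_cases hi : w i = A
      · simp [hi, h]
      · simp only [hi, if_false]
        have h1 : w j.rev = M := by
          refine hnA _ fun hA => hanti j ?_
          rw [h, hA]
        rw [h1, hnA i hi]
    · right
      intro i
      have hjM : w j = M := hnA j h
      by_cases hi : w i = A
      · simp only [hi, if_true]
        have : w i.rev = M := by
          refine hnA _ fun hA => hanti i ?_
          rw [hi, hA]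
        rw [hjM, this]
      · simp only [hi, if_false]
        have h1 : w j.rev = A := by
          refine hnM _ fun hM => hanti j ?_
          rw [hjM, hM]
        have h2 : w i.rev = A := by
          refine hnM _ fun hM => hanti i ?_
          rw [hnA i hi, hM]
        rw [h1, h2]
  have hdiagval : ∀ j : Fin n, (if w j = A then w j else w j.rev) = A := by
    intro j
    by_cases h : w j = A
    · simp [h]
    · simp only [h, if_false]
      refine hnM _ fun hM => hanti j ?_
      rw [hnA j h, hM]
  have hadiagval : ∀ j : Fin n, (if w j = A then w j.rev else w j.rev.rev) = M := by
    intro j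
    by_cases h : w j = A
    · simp only [h, if_true]
      refine hnA _ fun hA => hanti j ?_
      rw [h, hA]
    · simp only [h, if_false, Fin.rev_rev]
      exact hnA j h
  have hdiag : ¬ diagC w (fun i j => if w i = A then w j else w j.rev) := by
    rintro (h | h)
    · have := (h iM).symm.trans (hdiagval iM)
      rw [hiM] at this; exact hAM this.symm
    · have := (h iM.rev).symm.trans (hdiagval iM.rev)
      rw [Fin.rev_rev, hiM] at this; exact hAM this.symm
  have hadiag : ¬ adiagC w (fun i j => if w i = A then w j else w j.rev) := by
    rintro (h | h)
    · have := (h iA).symm.trans (hadiagval iA)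
      rw [hiA] at this; exact hAM this
    · have := (h iA.rev).symm.trans (hadiagval iA.rev)
      rw [Fin.rev_rev, hiA] at this; exact hAM this
  have hRuniv : {i | rowC w (fun i j => if w i = A then w j else w j.rev) i} = Set.univ :=
    Set.eq_univ_of_forall hrow
  have hCuniv : {i | colC w (fun i j => if w i = A then w j else w j.rev) i} = Set.univ :=
    Set.eq_univ_of_forall hcol
  unfold count
  rw [hRuniv, hCuniv, if_neg hdiag, if_neg hadiag]
  simp [Set.ncard_univ]
  ring

theorem antisymmetric_fword {n : ℕ} (hn : 2 ≤ n) (w : Fin n → α)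
    (A M : α) (hAM : A ≠ M) (htwo : ∀ i, w i = A ∨ w i = M)
    (hanti : ∀ i, w i ≠ w i.rev) :
    fword w = 2 * n := by
  obtain ⟨G, hG⟩ := exists_grid hn hAM htwo hanti
  have hmem : 2 * n ∈ {m | ∃ G : Fin n → Fin n → α, count w G = m} := ⟨G, hG⟩
  have hub : ∀ m ∈ {m | ∃ G : Fin n → Fin n → α, count w G = m}, m ≤ 2 * n := by
    rintro m ⟨G', rfl⟩
    exact count_le hn hanti G'
  exact le_antisymm (csSup_le ⟨2 * n, hmem⟩ hub) (le_csSup ⟨2 * n, hub⟩ hmem)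

end WordGrid
end

section
/- Let n ≥ 2 and let w be a word of length n with w_i ≠ w_{n-i+1} for some i (w is not a palindrome). Then f(w,d) is asymptotic to (1/4)(n+2)^d as d → ∞, i.e., the limit as d → ∞ of f(w,d)/(n+2)^d equals 1/4. -/
namespace WordGridHD

variable {α : Type*}

/-- `(p; v)` is the canonical pair of a line in the grid `[n]^d`: all entries of `v` lie in
`{-1, 0, +1}`, the first nonzero entry of `v` is `+1`, and all the points
`p, p + v, …, p + (n-1)v` have all coordinates in `[n] = {1, …, n}`. -/
def IsCanonLine (n d : ℕ) (p v : Fin d → ℤ) : Prop :=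
  (∀ j, v j = -1 ∨ v j = 0 ∨ v j = 1) ∧
  (∃ j, v j = 1 ∧ ∀ j' < j, v j' = 0) ∧
  (∀ i : ℕ, i < n → ∀ j, 1 ≤ p j + i * v j ∧ p j + i * v j ≤ n)

/-- The line with canonical pair `(p; v)` contains the word `w` (forwards or backwards)
in the grid `G`. -/
def lineC {n d : ℕ} (w : Fin n → α) (G : (Fin d → ℤ) → α) (p v : Fin d → ℤ) : Prop :=
  (∀ i : Fin n, G (fun j => p j + (i : ℕ) * v j) = w i) ∨
  (∀ i : Fin n, G (fun j => p j + (i : ℕ) * v j) = w i.rev)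

/-- `f(w,G)`: the number of lines of `[n]^d` containing `w` in the grid `G`. -/
noncomputable def count {n : ℕ} (d : ℕ) (w : Fin n → α) (G : (Fin d → ℤ) → α) : ℕ :=
  {pv : (Fin d → ℤ) × (Fin d → ℤ) |
    IsCanonLine n d pv.1 pv.2 ∧ lineC w G pv.1 pv.2}.ncard

/-- `f(w,d)`: the maximum of `f(w,G)` over all `(n,d)`-grids `G`. -/
noncomputable def fword {n : ℕ} (w : Fin n → α) (d : ℕ) : ℕ :=
  sSup {m | ∃ G : (Fin d → ℤ) → α, count d w G = m}

open Finset

open scoped Classical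


/-! ### Type space: categories of coordinates along a line -/

/-- Category of a coordinate: `0` = increasing, `1` = decreasing, `m+1` = constant `m`. -/
abbrev Cat (n : ℕ) := Fin (n + 2)

variable {n d : ℕ}

/-- The point at (0-based) position `i` of the line with type `t`. -/
def zpt (n : ℕ) {d : ℕ} (t : Fin d → Cat n) (i : ℕ) : Fin d → ℤ :=
  fun j => if (t j).val = 0 then 1 + i else if (t j).val = 1 then (n : ℤ) - i
    else ((t j).val : ℤ) - 1

def cU (t : Fin d → Cat n) : ℕ := (univ.filter fun j => (t j).val = 0).card
def cD (t : Fin d → Cat n) : ℕ := (univ.filter fun j => (t j).val = 1).card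
def cC (m : ℕ) (t : Fin d → Cat n) : ℕ := (univ.filter fun j => (t j).val = m + 1).card
def cL (t : Fin d → Cat n) : ℕ :=
  (univ.filter fun j => 2 ≤ (t j).val ∧ (t j).val ≤ n / 2 + 1).card

/-- number of coordinates of `z` equal to `m` -/
def cT (m : ℕ) (z : Fin d → ℤ) : ℕ := (univ.filter fun j => z j = (m : ℤ)).card

def sS (n q : ℕ) {d : ℕ} (z : Fin d → ℤ) : ℕ := cT q z + cT (n + 1 - q) z

def sL (n : ℕ) {d : ℕ} (z : Fin d → ℤ) : ℕ :=
  (univ.filter fun j => 1 ≤ z j ∧ z j ≤ ((n / 2 : ℕ) : ℤ)).card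

lemma cT_zpt (t : Fin d → Cat n) {i : ℕ} (hi : i < n) {m : ℕ} (hm1 : 1 ≤ m) :
    cT m (zpt n t i) =
      (if m = i + 1 then cU t else 0) + (if m = n - i then cD t else 0) + cC m t := by
  classical
  have key : ∀ j, (zpt n t i j = (m : ℤ)) ↔
      (((t j).val = 0 ∧ m = i + 1) ∨ ((t j).val = 1 ∧ m = n - i) ∨ (t j).val = m + 1) := by
    intro j
    unfold zpt
    by_cases h0 : (t j).val = 0
    · rw [if_pos h0]
      constructor
      · intro h; exact Or.inl ⟨h0, by omega⟩
      · rintro (⟨-, h⟩ | ⟨h, -⟩ | h) <;> omega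
    · by_cases h1 : (t j).val = 1
      · rw [if_neg h0, if_pos h1]
        constructor
        · intro h; exact Or.inr (Or.inl ⟨h1, by omega⟩)
        · rintro (⟨h, -⟩ | ⟨-, h⟩ | h) <;> omega
      · rw [if_neg h0, if_neg h1]
        constructor
        · intro h; refine Or.inr (Or.inr ?_); omega
        · rintro (⟨h, -⟩ | ⟨h, -⟩ | h) <;> omega
  unfold cT
  rw [filter_congr (fun j _ => by rw [key j]), filter_or, filter_or,
    card_union_of_disjoint, card_union_of_disjoint]
  · have e1 : (univ.filter fun j => (t j).val = 0 ∧ m = i + 1).card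
        = if m = i + 1 then cU t else 0 := by
      split_ifs with h <;> simp [cU, h]
    have e2 : (univ.filter fun j => (t j).val = 1 ∧ m = n - i).card
        = if m = n - i then cD t else 0 := by
      split_ifs with h <;> simp [cD, h]
    rw [e1, e2, cC, add_assoc]
  · rw [disjoint_left]
    intro x hx hx'
    simp only [mem_filter, mem_univ, true_and] at hx hx'
    obtain ⟨h1, -⟩ := hx
    omega
  · rw [disjoint_left]
    intro x hx hx'
    simp only [mem_filter, mem_univ, true_and, mem_union] at hx hx'
    obtain ⟨h1, -⟩ := hx
    rcases hx' with ⟨h2, -⟩ | h2 <;> omega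

lemma sL_zpt (t : Fin d → Cat n) {i : ℕ} (hi : i < n) :
    sL n (zpt n t i) =
      (if i + 1 ≤ n / 2 then cU t else 0) + (if n - i ≤ n / 2 then cD t else 0) + cL t := by
  classical
  have key : ∀ j, (1 ≤ zpt n t i j ∧ zpt n t i j ≤ ((n / 2 : ℕ) : ℤ)) ↔
      (((t j).val = 0 ∧ i + 1 ≤ n / 2) ∨ ((t j).val = 1 ∧ n - i ≤ n / 2) ∨
        (2 ≤ (t j).val ∧ (t j).val ≤ n / 2 + 1)) := by
    intro j
    unfold zpt
    by_cases h0 : (t j).val = 0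
    · rw [if_pos h0]
      constructor
      · rintro ⟨-, h⟩; exact Or.inl ⟨h0, by omega⟩
      · rintro (⟨-, h⟩ | ⟨h, -⟩ | ⟨h, -⟩) <;> constructor <;> omega
    · by_cases h1 : (t j).val = 1
      · rw [if_neg h0, if_pos h1]
        constructor
        · rintro ⟨-, h⟩; exact Or.inr (Or.inl ⟨h1, by omega⟩)
        · rintro (⟨h, -⟩ | ⟨-, h⟩ | ⟨h, -⟩) <;> constructor <;> omega
      · rw [if_neg h0, if_neg h1]
        constructor
        · rintro ⟨h, h'⟩; exact Or.inr (Or.inr (by omega))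
        · rintro (⟨h, -⟩ | ⟨h, -⟩ | ⟨h, h'⟩) <;> constructor <;> omega
  unfold sL
  rw [filter_congr (fun j _ => by rw [key j]), filter_or, filter_or,
    card_union_of_disjoint, card_union_of_disjoint]
  · have e1 : (univ.filter fun j => (t j).val = 0 ∧ i + 1 ≤ n / 2).card
        = if i + 1 ≤ n / 2 then cU t else 0 := by
      split_ifs with h <;> simp [cU, h]
    have e2 : (univ.filter fun j => (t j).val = 1 ∧ n - i ≤ n / 2).card
        = if n - i ≤ n / 2 then cD t else 0 := by
      split_ifs with h <;> simp [cD, h]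
    rw [e1, e2, cL, add_assoc]
  · rw [disjoint_left]
    intro x hx hx'
    simp only [mem_filter, mem_univ, true_and] at hx hx'
    obtain ⟨h1, -⟩ := hx
    obtain ⟨h2, -⟩ := hx'
    omega
  · rw [disjoint_left]
    intro x hx hx'
    simp only [mem_filter, mem_univ, true_and, mem_union] at hx hx'
    obtain ⟨h1, -⟩ := hx
    rcases hx' with ⟨h2, -⟩ | ⟨h2, -⟩ <;> omega



/-! ### the construction -/

def Good (n : ℕ) {d : ℕ} (t : Fin d → Cat n) : Prop :=
  Odd (cU t + cD t) ∧
  ∀ m ∈ Finset.Icc 1 n, ∀ m' ∈ Finset.Icc 1 n, m ≠ m' →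
    2 * cC m' t < cU t + cD t + 2 * cC m t

def Canon {n d : ℕ} (t : Fin d → Cat n) : Prop :=
  ∀ j, (t j).val = 1 → ∃ j' < j, (t j').val = 0

def toV (n : ℕ) {d : ℕ} (t : Fin d → Cat n) : Fin d → ℤ :=
  fun j => if (t j).val = 0 then 1 else if (t j).val = 1 then -1 else 0

def toP (n : ℕ) {d : ℕ} (t : Fin d → Cat n) : Fin d → ℤ :=
  fun j => if (t j).val = 0 then 1 else if (t j).val = 1 then (n : ℤ)
    else ((t j).val : ℤ) - 1

lemma toPV_zpt (t : Fin d → Cat n) (i : ℕ) :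
    (fun j => toP n t j + (i : ℤ) * toV n t j) = zpt n t i := by
  funext j
  unfold toP toV zpt
  by_cases h0 : (t j).val = 0
  · rw [if_pos h0, if_pos h0, if_pos h0]; ring
  · by_cases h1 : (t j).val = 1
    · rw [if_neg h0, if_pos h1, if_neg h0, if_pos h1, if_neg h0, if_pos h1]; ring
    · rw [if_neg h0, if_neg h1, if_neg h0, if_neg h1, if_neg h0, if_neg h1]; ring

noncomputable def qdec (n : ℕ) {d : ℕ} (z : Fin d → ℤ) : ℕ :=
  letI := Classical.propDecidable
  if h : ∃ q, (q ∈ Finset.Icc 1 ((n + 1) / 2)) ∧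
      ∀ q' ∈ Finset.Icc 1 ((n + 1) / 2), q' ≠ q → sS n q' z < sS n q z
  then h.choose else 1

def fidx (n : ℕ) (hn : 0 < n) (k : ℕ) : Fin n := ⟨min k (n - 1), by omega⟩

noncomputable def gridG {α : Type*} (n : ℕ) (hn : 0 < n) (w : Fin n → α) {d : ℕ}
    (z : Fin d → ℤ) : α :=
  if Even (sL n z) then w (fidx n hn (qdec n z - 1))
  else w (fidx n hn (n - qdec n z))

theorem gridG_spells {α : Type*} (hn : 2 ≤ n) (w : Fin n → α) (t : Fin d → Cat n)
    (hg : Good n t) :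
    (∀ i : Fin n, gridG n (by omega) w (zpt n t i) = w i) ∨
    (∀ i : Fin n, gridG n (by omega) w (zpt n t i) = w i.rev) := by
  classical
  obtain ⟨hodd, hdec⟩ := hg
  have hUD : 1 ≤ cU t + cD t := by
    rcases hodd with ⟨k, hk⟩; omega
  have hpcc : ∀ q q' : ℕ, 1 ≤ q → q ≤ (n + 1) / 2 → 1 ≤ q' → q' ≤ (n + 1) / 2 → q ≠ q' →
      cC q' t + cC (n + 1 - q') t < cU t + cD t + (cC q t + cC (n + 1 - q) t) := by
    intro q q' h1 h2 h3 h4 hne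
    have e1 := hdec q (mem_Icc.2 (by omega)) q' (mem_Icc.2 (by omega)) hne
    have e2 := hdec (n + 1 - q) (mem_Icc.2 (by omega)) (n + 1 - q') (mem_Icc.2 (by omega))
      (by omega)
    omega
  have hq : ∀ i : Fin n, qdec n (zpt n t i) = min (i.val + 1) (n - i.val) := by
    intro i
    have hi := i.isLt
    set q0 := min (i.val + 1) (n - i.val) with hq0
    have hq01 : 1 ≤ q0 := by omega
    have hq02 : q0 ≤ (n + 1) / 2 := by omega
    have hS0 : cU t + cD t + (cC q0 t + cC (n + 1 - q0) t) ≤ sS n q0 (zpt n t i) := by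
      unfold sS
      rw [cT_zpt t hi hq01, cT_zpt t hi (show 1 ≤ n + 1 - q0 by omega)]
      split_ifs <;> omega
    have hS' : ∀ q', 1 ≤ q' → q' ≤ (n + 1) / 2 → q' ≠ q0 →
        sS n q' (zpt n t i) = cC q' t + cC (n + 1 - q') t := by
      intro q' h1 h2 hne
      unfold sS
      rw [cT_zpt t hi h1, cT_zpt t hi (show 1 ≤ n + 1 - q' by omega)]
      split_ifs <;> omega
    have hex : ∃ q, (q ∈ Finset.Icc 1 ((n + 1) / 2)) ∧
        ∀ q' ∈ Finset.Icc 1 ((n + 1) / 2), q' ≠ q →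
          sS n q' (zpt n t i) < sS n q (zpt n t i) := by
      refine ⟨q0, mem_Icc.2 ⟨hq01, hq02⟩, fun q' hq' hne => ?_⟩
      obtain ⟨ha, hb⟩ := mem_Icc.1 hq'
      rw [hS' q' ha hb hne]
      exact lt_of_lt_of_le (hpcc q0 q' hq01 hq02 ha hb (fun h => hne h.symm)) hS0
    unfold qdec
    rw [dif_pos hex]
    obtain ⟨hmem, hspec⟩ := hex.choose_spec
    by_contra hne
    obtain ⟨ha, hb⟩ := mem_Icc.1 hmem
    have h1 : sS n q0 (zpt n t i) < sS n hex.choose (zpt n t i) :=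
      hspec q0 (mem_Icc.2 ⟨hq01, hq02⟩) (fun h => hne h.symm)
    have h2 : sS n hex.choose (zpt n t i) < sS n q0 (zpt n t i) := by
      rw [hS' hex.choose ha hb hne]
      exact lt_of_lt_of_le (hpcc q0 hex.choose hq01 hq02 ha hb (fun h => hne h.symm)) hS0
    omega
  by_cases hpar : Even (cL t + cU t)
  · left
    intro i
    have hi := i.isLt
    unfold gridG
    rw [hq i, sL_zpt t hi]
    by_cases hfh : i.val + 1 ≤ n / 2
    · have h2 : ¬ (n - i.val ≤ n / 2) := by omega
      rw [if_pos hfh, if_neg h2]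
      have hev : Even (cU t + 0 + cL t) := by
        rw [Nat.even_iff] at hpar ⊢; omega
      rw [if_pos hev]
      exact congrArg w (Fin.ext (by simp only [fidx]; omega))
    · by_cases hsh : n - i.val ≤ n / 2
      · rw [if_neg hfh, if_pos hsh]
        have hev : ¬ Even (0 + cD t + cL t) := by
          rw [Nat.even_iff] at hpar ⊢
          rw [Nat.odd_iff] at hodd
          omega
        rw [if_neg hev]
        exact congrArg w (Fin.ext (by simp only [fidx]; omega))
      · rw [if_neg hfh, if_neg hsh]
        have hmid : 2 * i.val + 1 = n := by omega
        split_ifs <;> exact congrArg w (Fin.ext (by simp only [fidx]; omega))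
  · right
    intro i
    have hi := i.isLt
    have hrev : (i.rev).val = n - (i.val + 1) := by
      simp [Fin.rev]
    unfold gridG
    rw [hq i, sL_zpt t hi]
    by_cases hfh : i.val + 1 ≤ n / 2
    · have h2 : ¬ (n - i.val ≤ n / 2) := by omega
      rw [if_pos hfh, if_neg h2]
      have hev : ¬ Even (cU t + 0 + cL t) := by
        rw [Nat.even_iff] at hpar ⊢; omega
      rw [if_neg hev]
      exact congrArg w (Fin.ext (by simp only [fidx]; omega))
    · by_cases hsh : n - i.val ≤ n / 2
      · rw [if_neg hfh, if_pos hsh]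
        have hev : Even (0 + cD t + cL t) := by
          rw [Nat.even_iff] at hpar ⊢
          rw [Nat.odd_iff] at hodd
          omega
        rw [if_pos hev]
        exact congrArg w (Fin.ext (by simp only [fidx]; omega))
      · rw [if_neg hfh, if_neg hsh]
        have hmid : 2 * i.val + 1 = n := by omega
        split_ifs <;> exact congrArg w (Fin.ext (by simp only [fidx]; omega))



/-! ### canonical lines from good types -/

lemma toV_mem (t : Fin d → Cat n) (j : Fin d) :
    toV n t j = -1 ∨ toV n t j = 0 ∨ toV n t j = 1 := by
  unfold toV; split_ifs <;> simp

lemma toV_first {t : Fin d → Cat n} (hUD : 1 ≤ cU t + cD t) (hc : Canon t) :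
    ∃ j, toV n t j = 1 ∧ ∀ j' < j, toV n t j' = 0 := by
  classical
  have hne : (univ.filter fun j : Fin d => (t j).val < 2).Nonempty := by
    by_contra h
    rw [Finset.not_nonempty_iff_eq_empty] at h
    have h0 : cU t = 0 := by
      rw [cU, Finset.card_eq_zero]
      rw [Finset.eq_empty_iff_forall_notMem] at h ⊢
      intro x hx
      rw [mem_filter] at hx
      exact h x (mem_filter.2 ⟨mem_univ x, by omega⟩)
    have h1 : cD t = 0 := by
      rw [cD, Finset.card_eq_zero]
      rw [Finset.eq_empty_iff_forall_notMem] at h ⊢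
      intro x hx
      rw [mem_filter] at hx
      exact h x (mem_filter.2 ⟨mem_univ x, by omega⟩)
    omega
  set j0 := Finset.min' _ hne with hj0
  have hj0m : (t j0).val < 2 := (mem_filter.1 (Finset.min'_mem _ hne)).2
  have hup : (t j0).val = 0 := by
    by_contra h
    have h1 : (t j0).val = 1 := by omega
    obtain ⟨j', hj', hj'0⟩ := hc j0 h1
    have : j0 ≤ j' := Finset.min'_le (univ.filter fun j : Fin d => (t j).val < 2) j'
      (mem_filter.2 ⟨mem_univ j', by omega⟩)
    exact absurd (lt_of_lt_of_le hj' this) (lt_irrefl _)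
  refine ⟨j0, by unfold toV; rw [if_pos hup], fun j' hj' => ?_⟩
  have : ¬ ((t j').val < 2) := by
    intro h
    have : j0 ≤ j' := Finset.min'_le (univ.filter fun j : Fin d => (t j).val < 2) j'
      (mem_filter.2 ⟨mem_univ j', h⟩)
    exact absurd (lt_of_lt_of_le hj' this) (lt_irrefl _)
  unfold toV
  rw [if_neg (by omega), if_neg (by omega)]

lemma isCanon_toPV (hn : 2 ≤ n) (t : Fin d → Cat n) (hg : Good n t) (hc : Canon t) :
    IsCanonLine n d (toP n t) (toV n t) := by
  have hUD : 1 ≤ cU t + cD t := by rcases hg.1 with ⟨k, hk⟩; omega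
  refine ⟨toV_mem t, toV_first hUD hc, fun i hi j => ?_⟩
  have := congrFun (toPV_zpt t i) j
  rw [this]
  unfold zpt
  have hval := (t j).isLt
  split_ifs <;> constructor <;> push_cast <;> omega

lemma toPV_inj : Function.Injective (fun t : Fin d → Cat n => (toP n t, toV n t)) := by
  intro t t' h
  have hp : toP n t = toP n t' := congrArg Prod.fst h
  have hv : toV n t = toV n t' := congrArg Prod.snd h
  funext j
  have hpj : toP n t j = toP n t' j := congrFun hp j
  have hvj : toV n t j = toV n t' j := congrFun hv j
  unfold toP at hpj
  unfold toV at hvj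
  have h1 := (t j).isLt
  have h2 := (t' j).isLt
  apply Fin.ext
  by_cases a0 : (t j).val = 0
  · rw [if_pos a0] at hvj
    by_cases b0 : (t' j).val = 0
    · omega
    · by_cases b1 : (t' j).val = 1
      · rw [if_neg b0, if_pos b1] at hvj; omega
      · rw [if_neg b0, if_neg b1] at hvj; omega
  · by_cases a1 : (t j).val = 1
    · rw [if_neg a0, if_pos a1] at hvj
      by_cases b0 : (t' j).val = 0
      · rw [if_pos b0] at hvj; omega
      · by_cases b1 : (t' j).val = 1
        · omega
        · rw [if_neg b0, if_neg b1] at hvj; omega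
    · rw [if_neg a0, if_neg a1] at hvj
      rw [if_neg a0, if_neg a1] at hpj
      by_cases b0 : (t' j).val = 0
      · rw [if_pos b0] at hvj; omega
      · by_cases b1 : (t' j).val = 1
        · rw [if_neg b0, if_pos b1] at hvj; omega
        · rw [if_neg b0, if_neg b1] at hpj; omega

/-! ### counting good types -/

lemma card_lt2 (t : Fin d → Cat n) :
    (univ.filter fun j : Fin d => (t j).val < 2).card = cU t + cD t := by
  classical
  have : (univ.filter fun j : Fin d => (t j).val < 2)
      = (univ.filter fun j => (t j).val = 0) ∪ (univ.filter fun j => (t j).val = 1) := by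
    ext j; simp only [mem_filter, mem_union, mem_univ, true_and]; omega
  rw [this, card_union_of_disjoint, cU, cD]
  rw [disjoint_left]
  intro x hx hx'
  simp only [mem_filter, mem_univ, true_and] at hx hx'
  omega

/-- the up-down swap involution -/
def sw {n d : ℕ} (t : Fin d → Cat n) : Fin d → Cat n :=
  fun j => if (t j).val = 0 then ⟨1, by omega⟩ else if (t j).val = 1 then ⟨0, by omega⟩ else t j

lemma sw_sw (t : Fin d → Cat n) : sw (sw t) = t := by
  funext j
  unfold sw
  by_cases h0 : (t j).val = 0
  · rw [if_pos h0]; simp only []; rw [if_neg (by simp), if_pos (by simp)]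
    exact Fin.ext (by simpa using h0.symm)
  · by_cases h1 : (t j).val = 1
    · rw [if_neg h0, if_pos h1]; simp only []; rw [if_pos (by simp)]
      exact Fin.ext (by simpa using h1.symm)
    · rw [if_neg h0, if_neg h1, if_neg h0, if_neg h1]

lemma cU_sw (t : Fin d → Cat n) : cU (sw t) = cD t := by
  unfold cU cD
  congr 1
  ext j
  simp only [mem_filter, mem_univ, true_and]
  unfold sw
  by_cases h0 : (t j).val = 0
  · rw [if_pos h0]; simp; omega
  · by_cases h1 : (t j).val = 1
    · rw [if_neg h0, if_pos h1]; simp; omega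
    · rw [if_neg h0, if_neg h1]; omega

lemma cD_sw (t : Fin d → Cat n) : cD (sw t) = cU t := by
  conv_rhs => rw [← sw_sw t]
  rw [cU_sw]

lemma cC_sw {m : ℕ} (hm : 1 ≤ m) (t : Fin d → Cat n) : cC m (sw t) = cC m t := by
  unfold cC
  congr 1
  ext j
  simp only [mem_filter, mem_univ, true_and]
  unfold sw
  by_cases h0 : (t j).val = 0
  · rw [if_pos h0]; simp; omega
  · by_cases h1 : (t j).val = 1
    · rw [if_neg h0, if_pos h1]; simp; omega
    · rw [if_neg h0, if_neg h1]

lemma good_sw (t : Fin d → Cat n) (hg : Good n t) : Good n (sw t) := by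
  obtain ⟨h1, h2⟩ := hg
  constructor
  · rw [cU_sw, cD_sw]; rwa [Nat.add_comm]
  · intro m hm m' hm' hne
    rw [cU_sw, cD_sw, cC_sw (mem_Icc.1 hm).1, cC_sw (mem_Icc.1 hm').1]
    have := h2 m hm m' hm' hne
    omega

lemma canon_iff {t : Fin d → Cat n}
    (hne : (univ.filter fun j : Fin d => (t j).val < 2).Nonempty) :
    Canon t ↔ (t ((univ.filter fun j : Fin d => (t j).val < 2).min' hne)).val = 0 := by
  classical
  set j0 := (univ.filter fun j : Fin d => (t j).val < 2).min' hne with hj0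
  have hj0m : (t j0).val < 2 := (mem_filter.1 (Finset.min'_mem _ hne)).2
  constructor
  · intro hc
    by_contra h
    have h1 : (t j0).val = 1 := by omega
    obtain ⟨j', hj', hj'0⟩ := hc j0 h1
    have : j0 ≤ j' := Finset.min'_le (univ.filter fun j : Fin d => (t j).val < 2) j'
      (mem_filter.2 ⟨mem_univ j', by omega⟩)
    exact absurd (lt_of_lt_of_le hj' this) (lt_irrefl _)
  · intro h0 j hj
    refine ⟨j0, ?_, h0⟩
    have hle : j0 ≤ j := Finset.min'_le (univ.filter fun j : Fin d => (t j).val < 2) j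
      (mem_filter.2 ⟨mem_univ j, by omega⟩)
    rcases lt_or_eq_of_le hle with h | h
    · exact h
    · rw [h] at h0; omega

lemma ud_nonempty {t : Fin d → Cat n} (hUD : 1 ≤ cU t + cD t) :
    (univ.filter fun j : Fin d => (t j).val < 2).Nonempty := by
  rw [← Finset.card_pos, card_lt2]; omega

lemma canon_sw {t : Fin d → Cat n} (hUD : 1 ≤ cU t + cD t) (hc : Canon t) :
    ¬ Canon (sw t) := by
  classical
  have hne := ud_nonempty hUD
  have hne' : (univ.filter fun j : Fin d => ((sw t) j).val < 2).Nonempty := by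
    rw [← Finset.card_pos, card_lt2, cU_sw, cD_sw]; omega
  have hsame : (univ.filter fun j : Fin d => ((sw t) j).val < 2)
      = (univ.filter fun j : Fin d => (t j).val < 2) := by
    ext j
    simp only [mem_filter, mem_univ, true_and]
    unfold sw
    by_cases h0 : (t j).val = 0
    · rw [if_pos h0]; simp; omega
    · by_cases h1 : (t j).val = 1
      · rw [if_neg h0, if_pos h1]; simp; omega
      · rw [if_neg h0, if_neg h1]
  rw [canon_iff hne'] at *
  rw [canon_iff hne] at hc
  intro hcs
  set j0 := (univ.filter fun j : Fin d => (t j).val < 2).min' hne with hj0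
  have : (univ.filter fun j : Fin d => ((sw t) j).val < 2).min' hne' = j0 := by
    congr 1
  rw [this] at hcs
  unfold sw at hcs
  rw [if_pos hc] at hcs
  simp at hcs

lemma canon_sw' {t : Fin d → Cat n} (hUD : 1 ≤ cU t + cD t) (hc : ¬ Canon t) :
    Canon (sw t) := by
  classical
  have hne := ud_nonempty hUD
  have hne' : (univ.filter fun j : Fin d => ((sw t) j).val < 2).Nonempty := by
    rw [← Finset.card_pos, card_lt2, cU_sw, cD_sw]; omega
  have hsame : (univ.filter fun j : Fin d => ((sw t) j).val < 2)
      = (univ.filter fun j : Fin d => (t j).val < 2) := by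
    ext j
    simp only [mem_filter, mem_univ, true_and]
    unfold sw
    by_cases h0 : (t j).val = 0
    · rw [if_pos h0]; simp; omega
    · by_cases h1 : (t j).val = 1
      · rw [if_neg h0, if_pos h1]; simp; omega
      · rw [if_neg h0, if_neg h1]
  rw [canon_iff hne] at hc
  rw [canon_iff hne']
  set j0 := (univ.filter fun j : Fin d => (t j).val < 2).min' hne with hj0
  have heq : (univ.filter fun j : Fin d => ((sw t) j).val < 2).min' hne' = j0 := by
    congr 1
  rw [heq]
  have hj0m : (t j0).val < 2 := (mem_filter.1 (Finset.min'_mem _ hne)).2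
  have h1 : (t j0).val = 1 := by omega
  unfold sw
  rw [if_neg (by omega), if_pos h1]

lemma card_good_twice (n d : ℕ) :
    (univ.filter fun t : Fin d → Cat n => Good n t).card
      = 2 * (univ.filter fun t : Fin d → Cat n => Good n t ∧ Canon t).card := by
  classical
  have hsplit := Finset.card_filter_add_card_filter_not
    (s := univ.filter fun t : Fin d → Cat n => Good n t) (p := fun t => Canon t)
  rw [Finset.filter_filter, Finset.filter_filter] at hsplit
  have hbij : (univ.filter fun t : Fin d → Cat n => Good n t ∧ ¬ Canon t).card
      = (univ.filter fun t : Fin d → Cat n => Good n t ∧ Canon t).card := by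
    apply Finset.card_bij' (fun t _ => sw t) (fun t _ => sw t)
    · intro t ht
      simp only [mem_filter, mem_univ, true_and] at ht ⊢
      obtain ⟨hg, hnc⟩ := ht
      have hUD : 1 ≤ cU t + cD t := by rcases hg.1 with ⟨k, hk⟩; omega
      exact ⟨good_sw t hg, canon_sw' hUD hnc⟩
    · intro t ht
      simp only [mem_filter, mem_univ, true_and] at ht ⊢
      obtain ⟨hg, hc⟩ := ht
      have hUD : 1 ≤ cU t + cD t := by rcases hg.1 with ⟨k, hk⟩; omega
      exact ⟨good_sw t hg, canon_sw hUD hc⟩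
    · intro t ht; exact sw_sw t
    · intro t ht; exact sw_sw t
  omega

lemma card_univ_types (n d : ℕ) :
    (univ : Finset (Fin d → Cat n)).card = (n + 2) ^ d := by
  classical
  rw [Finset.card_univ]
  rw [Fintype.card_fun]
  simp

lemma sum_sign (n d : ℕ) :
    ∑ t : Fin d → Cat n, (-1 : ℤ) ^ (cU t + cD t) = ((n : ℤ) - 2) ^ d := by
  classical
  have key : ∀ t : Fin d → Cat n,
      (-1 : ℤ) ^ (cU t + cD t) = ∏ j, (if (t j).val < 2 then (-1 : ℤ) else 1) := by
    intro t
    rw [Finset.prod_ite, Finset.prod_const, Finset.prod_const, one_pow, mul_one, card_lt2]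
  have hcell : ∑ a : Cat n, (if a.val < 2 then (-1 : ℤ) else 1) = (n : ℤ) - 2 := by
    rw [Finset.sum_ite, Finset.sum_const, Finset.sum_const]
    have h2 : (univ.filter fun a : Cat n => a.val < 2).card = 2 := by
      have e : (univ.filter fun a : Cat n => a.val < 2)
          = ({⟨0, by omega⟩, ⟨1, by omega⟩} : Finset (Cat n)) := by
        ext a
        simp only [mem_filter, mem_univ, true_and, mem_insert, mem_singleton, Fin.ext_iff]
        omega
      rw [e]
      rw [Finset.card_insert_of_notMem (by simp), Finset.card_singleton]
    have h3 : (univ.filter fun a : Cat n => ¬ (a.val < 2)).card = n := by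
      have := Finset.card_filter_add_card_filter_not
        (s := (univ : Finset (Cat n))) (p := fun a => a.val < 2)
      have hu : (univ : Finset (Cat n)).card = n + 2 := by simp
      omega
    rw [h2, h3]
    push_cast
    ring
  have hprod := Finset.prod_univ_sum (fun _ : Fin d => (univ : Finset (Cat n)))
    (fun _ a => (if a.val < 2 then (-1 : ℤ) else 1))
  rw [Fintype.piFinset_univ] at hprod
  rw [Finset.sum_congr rfl (fun t _ => key t), ← hprod, hcell, Finset.prod_const,
    Finset.card_univ, Fintype.card_fin]

lemma card_odd_types (n d : ℕ) :
    2 * ((univ.filter fun t : Fin d → Cat n => Odd (cU t + cD t)).card : ℤ)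
      = ((n : ℤ) + 2) ^ d - ((n : ℤ) - 2) ^ d := by
  classical
  have hsum := sum_sign n d
  have hsplit := Finset.sum_filter_add_sum_filter_not
    (s := (univ : Finset (Fin d → Cat n))) (p := fun t => Odd (cU t + cD t))
    (f := fun t => (-1 : ℤ) ^ (cU t + cD t))
  have h1 : ∑ t ∈ univ.filter (fun t : Fin d → Cat n => Odd (cU t + cD t)),
      (-1 : ℤ) ^ (cU t + cD t)
      = - ((univ.filter fun t : Fin d → Cat n => Odd (cU t + cD t)).card : ℤ) := by
    rw [Finset.sum_congr rfl (fun t ht => (mem_filter.1 ht).2.neg_one_pow)]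
    rw [Finset.sum_const]
    simp
  have h2 : ∑ t ∈ univ.filter (fun t : Fin d → Cat n => ¬ Odd (cU t + cD t)),
      (-1 : ℤ) ^ (cU t + cD t)
      = ((univ.filter fun t : Fin d → Cat n => ¬ Odd (cU t + cD t)).card : ℤ) := by
    rw [Finset.sum_congr rfl (fun t ht =>
      (Nat.not_odd_iff_even.1 (mem_filter.1 ht).2).neg_one_pow)]
    rw [Finset.sum_const]
    simp
  have hcards := Finset.card_filter_add_card_filter_not
    (s := (univ : Finset (Fin d → Cat n))) (p := fun t => Odd (cU t + cD t))
  rw [card_univ_types n d] at hcards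
  rw [h1, h2, hsum] at hsplit
  have hc2 : (((n : ℤ)) + 2) ^ d = ((((n + 2) ^ d : ℕ) : ℤ)) := by push_cast; ring
  rw [hc2, ← hcards]
  push_cast
  linarith [hsplit]

lemma sum_ite_card {γ β : Type*} [Fintype γ] [NonAssocSemiring β]
    (p : γ → Prop) [DecidablePred p] (c : β) :
    ∑ x, (if p x then c else 0) = ((univ.filter p).card : β) * c := by
  rw [Finset.sum_ite, Finset.sum_const, Finset.sum_const]
  simp [nsmul_eq_mul]

lemma card_cat_lt2 (n : ℕ) : ((univ : Finset (Cat n)).filter fun a => a.val < 2).card = 2 := by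
  have e : ((univ : Finset (Cat n)).filter fun a => a.val < 2)
      = ({⟨0, by omega⟩, ⟨1, by omega⟩} : Finset (Cat n)) := by
    ext a
    simp only [mem_filter, mem_univ, true_and, mem_insert, mem_singleton, Fin.ext_iff]
    omega
  rw [e, Finset.card_insert_of_notMem (by simp), Finset.card_singleton]

lemma card_cat_eq (n k : ℕ) (hk : k < n + 2) :
    ((univ : Finset (Cat n)).filter fun a => a.val = k).card = 1 := by
  have e : ((univ : Finset (Cat n)).filter fun a => a.val = k)
      = ({⟨k, hk⟩} : Finset (Cat n)) := by
    ext a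
    simp only [mem_filter, mem_univ, true_and, mem_singleton, Fin.ext_iff]
  rw [e, Finset.card_singleton]

lemma card_cat_eq_le (n k : ℕ) :
    ((univ : Finset (Cat n)).filter fun a => a.val = k).card ≤ 1 := by
  rw [Finset.card_le_one]
  intro a ha b hb
  simp only [mem_filter] at ha hb
  exact Fin.ext (ha.2.trans hb.2.symm)

noncomputable def badf (n m m' : ℕ) : Cat n → ℝ := fun a =>
  (5 / 4 : ℝ) ^ (if a.val = m' + 1 then 2 else 0)
    * (4 / 5 : ℝ) ^ ((if a.val = m + 1 then 2 else 0) + (if a.val < 2 then 1 else 0))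

lemma card_bad (n d : ℕ) {m m' : ℕ} (h1 : 1 ≤ m) (h2 : m ≤ n) (h3 : 1 ≤ m') (hne : m ≠ m') :
    ((univ.filter fun t : Fin d → Cat n =>
        cU t + cD t + 2 * cC m t ≤ 2 * cC m' t).card : ℝ)
      ≤ ((n : ℝ) + 2 - 79 / 400) ^ d := by
  classical
  have hfpos : ∀ a, 0 < badf n m m' a := by
    intro a
    unfold badf
    positivity
  have hprod : ∀ t : Fin d → Cat n,
      ∏ j, badf n m m' (t j)
        = (5 / 4 : ℝ) ^ (2 * cC m' t) * (4 / 5 : ℝ) ^ (2 * cC m t + (cU t + cD t)) := by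
    intro t
    unfold badf
    rw [Finset.prod_mul_distrib, Finset.prod_pow_eq_pow_sum, Finset.prod_pow_eq_pow_sum]
    congr 2
    · rw [sum_ite_card]
      unfold cC
      exact mul_comm _ 2
    · rw [Finset.sum_add_distrib, sum_ite_card, sum_ite_card, card_lt2]
      unfold cC
      simp only [Nat.cast_id]
      omega
  have hcell : ∑ a : Cat n, badf n m m' a ≤ (n : ℝ) + 2 - 79 / 400 := by
    have hpt : ∀ a : Cat n, badf n m m' a
        = 1 + (if a.val = m' + 1 then (9 / 16 : ℝ) else 0)
        - (if a.val = m + 1 then (9 / 25 : ℝ) else 0)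
        - (if a.val < 2 then (1 / 5 : ℝ) else 0) := by
      intro a
      unfold badf
      by_cases hm' : a.val = m' + 1
      · rw [if_pos hm', if_neg (by omega), if_neg (by omega), if_pos hm',
          if_neg (by omega), if_neg (by omega)]
        norm_num
      · by_cases hm : a.val = m + 1
        · rw [if_neg hm', if_pos hm, if_neg (by omega), if_neg hm', if_pos hm,
            if_neg (by omega)]
          norm_num
        · by_cases hlt : a.val < 2
          · rw [if_neg hm', if_neg hm, if_pos hlt, if_neg hm', if_neg hm, if_pos hlt]
            norm_num
          · rw [if_neg hm', if_neg hm, if_neg hlt, if_neg hm', if_neg hm, if_neg hlt]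
            norm_num
    rw [Finset.sum_congr rfl (fun a _ => hpt a)]
    have hs1 : ∑ _a : Cat n, (1 : ℝ) = (n : ℝ) + 2 := by
      rw [Finset.sum_const, Finset.card_univ]
      simp only [Fintype.card_fin, nsmul_eq_mul, mul_one]
      push_cast
      ring
    rw [Finset.sum_sub_distrib, Finset.sum_sub_distrib, Finset.sum_add_distrib]
    rw [hs1, sum_ite_card, sum_ite_card, sum_ite_card]
    rw [card_cat_eq n (m + 1) (by omega), card_cat_lt2]
    have hle := card_cat_eq_le n (m' + 1)
    have hle' : (((univ : Finset (Cat n)).filter fun a => a.val = m' + 1).card : ℝ) ≤ 1 := by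
      exact_mod_cast hle
    nlinarith [hle']
  have hone : ∀ t ∈ univ.filter (fun t : Fin d → Cat n =>
      cU t + cD t + 2 * cC m t ≤ 2 * cC m' t), (1 : ℝ) ≤ ∏ j, badf n m m' (t j) := by
    intro t ht
    rw [mem_filter] at ht
    rw [hprod t]
    have hb : 2 * cC m t + (cU t + cD t) ≤ 2 * cC m' t := by omega
    have hcancel : (5 / 4 : ℝ) ^ (2 * cC m t + (cU t + cD t))
        * (4 / 5 : ℝ) ^ (2 * cC m t + (cU t + cD t)) = 1 := by
      rw [← mul_pow]
      norm_num
    calc (1 : ℝ) = (5 / 4 : ℝ) ^ (2 * cC m t + (cU t + cD t))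
          * (4 / 5 : ℝ) ^ (2 * cC m t + (cU t + cD t)) := hcancel.symm
      _ ≤ (5 / 4 : ℝ) ^ (2 * cC m' t) * (4 / 5 : ℝ) ^ (2 * cC m t + (cU t + cD t)) := by
          apply mul_le_mul_of_nonneg_right _ (by positivity)
          exact pow_le_pow_right₀ (by norm_num) hb
  have hsum : ∑ t : Fin d → Cat n, ∏ j, badf n m m' (t j)
      = (∑ a : Cat n, badf n m m' a) ^ d := by
    have hprod2 := Finset.prod_univ_sum (fun _ : Fin d => (univ : Finset (Cat n)))
      (fun _ a => badf n m m' a)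
    rw [Fintype.piFinset_univ] at hprod2
    rw [← hprod2, Finset.prod_const, Finset.card_univ, Fintype.card_fin]
  calc ((univ.filter fun t : Fin d → Cat n =>
      cU t + cD t + 2 * cC m t ≤ 2 * cC m' t).card : ℝ)
      = ∑ _t ∈ (univ.filter fun t : Fin d → Cat n =>
          cU t + cD t + 2 * cC m t ≤ 2 * cC m' t), (1 : ℝ) := by
        rw [Finset.sum_const, nsmul_eq_mul, mul_one]
    _ ≤ ∑ t ∈ (univ.filter fun t : Fin d → Cat n =>
          cU t + cD t + 2 * cC m t ≤ 2 * cC m' t), ∏ j, badf n m m' (t j) :=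
        Finset.sum_le_sum hone
    _ ≤ ∑ t : Fin d → Cat n, ∏ j, badf n m m' (t j) :=
        Finset.sum_le_sum_of_subset_of_nonneg (Finset.subset_univ _)
          (fun t _ _ => le_of_lt (Finset.prod_pos (fun j _ => hfpos (t j))))
    _ = (∑ a : Cat n, badf n m m' a) ^ d := hsum
    _ ≤ ((n : ℝ) + 2 - 79 / 400) ^ d := by
        apply pow_le_pow_left₀ _ hcell
        exact Finset.sum_nonneg (fun a _ => (hfpos a).le)

/-! ### lower bound for count -/

lemma line_set_finite {α : Type*} (n d : ℕ) (hn : 0 < n) (w : Fin n → α)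
    (G : (Fin d → ℤ) → α) :
    {pv : (Fin d → ℤ) × (Fin d → ℤ) |
      IsCanonLine n d pv.1 pv.2 ∧ lineC w G pv.1 pv.2}.Finite := by
  apply Set.Finite.subset (Set.Finite.prod
    (Set.Finite.pi (fun _ : Fin d => Set.finite_Icc (1 : ℤ) n))
    (Set.Finite.pi (fun _ : Fin d => Set.finite_Icc (-1 : ℤ) 1)))
  rintro ⟨p, v⟩ ⟨⟨hv, -, hb⟩, -⟩
  refine ⟨?_, ?_⟩
  · intro j _
    have h0 := hb 0 hn j
    simp only [Nat.cast_zero, zero_mul, add_zero] at h0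
    exact Set.mem_Icc.2 h0
  · intro j _
    rcases hv j with h | h | h <;> rw [h] <;> rw [Set.mem_Icc] <;> constructor <;> norm_num

lemma count_lower {α : Type*} {n d : ℕ} (hn : 2 ≤ n) (w : Fin n → α) :
    (univ.filter fun t : Fin d → Cat n => Good n t ∧ Canon t).card
      ≤ count d w (gridG n (by omega) w) := by
  classical
  set G := gridG n (by omega : 0 < n) w with hG
  set S := {pv : (Fin d → ℤ) × (Fin d → ℤ) |
    IsCanonLine n d pv.1 pv.2 ∧ lineC w G pv.1 pv.2} with hS
  have hfin : S.Finite := line_set_finite n d (by omega) w G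
  set A := (univ.filter fun t : Fin d → Cat n => Good n t ∧ Canon t) with hA
  have hsub : (fun t : Fin d → Cat n => (toP n t, toV n t)) '' ↑A ⊆ S := by
    rintro ⟨p, v⟩ ⟨t, ht, heq⟩
    rw [Finset.mem_coe, hA, mem_filter] at ht
    obtain ⟨-, hg, hc⟩ := ht
    have hpv1 : toP n t = p := congrArg Prod.fst heq
    have hpv2 : toV n t = v := congrArg Prod.snd heq
    rw [hS]
    rw [← hpv1, ← hpv2]
    refine ⟨isCanon_toPV hn t hg hc, ?_⟩
    rcases gridG_spells hn w t hg with hsp | hsp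
    · left
      intro i
      rw [toPV_zpt t (i : ℕ)]
      exact hsp i
    · right
      intro i
      rw [toPV_zpt t (i : ℕ)]
      exact hsp i
  calc A.card = (↑A : Set (Fin d → Cat n)).ncard := (Set.ncard_coe_finset A).symm
    _ = ((fun t : Fin d → Cat n => (toP n t, toV n t)) '' ↑A).ncard :=
        (Set.ncard_image_of_injective _ toPV_inj).symm
    _ ≤ S.ncard := Set.ncard_le_ncard hsub hfin
    _ = count d w G := rfl

/-! ### upper bound -/

def iota (n : ℕ) {d : ℕ} (x : Fin d → Fin n) : Fin d → ℤ := fun j => (x j : ℤ) + 1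

def zeta (n : ℕ) (hn : 0 < n) {d : ℕ} (z : Fin d → ℤ) : Fin d → Fin n :=
  fun j => ⟨min (z j - 1).toNat (n - 1), by omega⟩

def blk {n d : ℕ} (i0 : Fin n) (x : Fin d → Fin n) : Fin d → Option (Fin n) :=
  fun j => if x j = i0 ∨ x j = i0.rev then none else some (x j)

lemma iota_zeta (n : ℕ) (hn : 0 < n) {d : ℕ} (z : Fin d → ℤ)
    (hz : ∀ j, 1 ≤ z j ∧ z j ≤ n) : iota n (zeta n hn z) = z := by
  funext j
  unfold iota zeta
  have := hz j
  simp only []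
  omega

/-- pairwise relation describing membership in the same block -/
def rel {n : ℕ} (i0 : Fin n) (u v : Fin n) : Prop :=
  u = v ∨ ((u = i0 ∨ u = i0.rev) ∧ (v = i0 ∨ v = i0.rev))

lemma blk_eq_iff {n d : ℕ} (i0 : Fin n) (x y : Fin d → Fin n) :
    blk i0 x = blk i0 y ↔ ∀ j, rel i0 (x j) (y j) := by
  rw [funext_iff]
  apply forall_congr'
  intro j
  unfold blk rel
  by_cases hx : x j = i0 ∨ x j = i0.rev
  · by_cases hy : y j = i0 ∨ y j = i0.rev
    · rw [if_pos hx, if_pos hy]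
      constructor
      · intro _; exact Or.inr ⟨hx, hy⟩
      · intro _; rfl
    · rw [if_pos hx, if_neg hy]
      constructor
      · intro h; exact absurd h (by simp)
      · rintro (h | ⟨-, h⟩)
        · exact absurd (h ▸ hx) hy
        · exact absurd h hy
  · rw [if_neg hx]
    by_cases hy : y j = i0 ∨ y j = i0.rev
    · rw [if_pos hy]
      constructor
      · intro h; exact absurd h (by simp)
      · rintro (h | ⟨h, -⟩)
        · exact absurd (h ▸ hy) (h ▸ hx)
        · exact absurd h hx
    · rw [if_neg hy]
      constructor
      · intro h
        left
        exact Option.some_injective _ h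
      · rintro (h | ⟨h, -⟩)
        · rw [h]
        · exact absurd h hx

lemma card_rel (n : ℕ) (hn : 2 ≤ n) (i0 : Fin n) (hi0 : i0 ≠ i0.rev) :
    (univ.filter fun uv : Fin n × Fin n => rel i0 uv.1 uv.2).card = n + 2 := by
  classical
  have hsplit : (univ.filter fun uv : Fin n × Fin n => rel i0 uv.1 uv.2)
      = (univ.filter fun uv : Fin n × Fin n => uv.1 = uv.2)
        ∪ ({i0, i0.rev} ×ˢ {i0, i0.rev}) := by
    ext ⟨u, v⟩
    simp only [mem_filter, mem_union, mem_univ, true_and, Finset.mem_product,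
      mem_insert, mem_singleton]
    unfold rel
    tauto
  rw [hsplit]
  rw [Finset.card_union]
  have h1 : (univ.filter fun uv : Fin n × Fin n => uv.1 = uv.2).card = n := by
    have e : (univ.filter fun uv : Fin n × Fin n => uv.1 = uv.2)
        = univ.image (fun u : Fin n => (u, u)) := by
      ext ⟨u, v⟩
      simp only [mem_filter, mem_univ, true_and, mem_image]
      constructor
      · intro h; exact ⟨u, by rw [h]⟩
      · rintro ⟨a, h⟩
        rw [Prod.ext_iff] at h
        obtain ⟨h1, h2⟩ := h
        exact h1.symm.trans h2
    rw [e, Finset.card_image_of_injective _ (fun a b h => (Prod.ext_iff.1 h).1),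
      Finset.card_univ, Fintype.card_fin]
  have h2 : ({i0, i0.rev} ×ˢ {i0, i0.rev} : Finset (Fin n × Fin n)).card = 4 := by
    rw [Finset.card_product]
    rw [Finset.card_insert_of_notMem (by simpa using hi0), Finset.card_singleton]
  have h3 : ((univ.filter fun uv : Fin n × Fin n => uv.1 = uv.2)
      ∩ ({i0, i0.rev} ×ˢ {i0, i0.rev})).card = 2 := by
    have e : (univ.filter fun uv : Fin n × Fin n => uv.1 = uv.2)
        ∩ ({i0, i0.rev} ×ˢ {i0, i0.rev})
        = ({(i0, i0), (i0.rev, i0.rev)} : Finset (Fin n × Fin n)) := by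
      ext ⟨u, v⟩
      simp only [mem_inter, mem_filter, mem_univ, true_and, Finset.mem_product,
        mem_insert, mem_singleton, Prod.ext_iff]
      constructor
      · rintro ⟨h, hu, hv⟩
        rcases hu with hu | hu <;> [left; right] <;> exact ⟨hu, h ▸ hu⟩
      · rintro (⟨h1, h2⟩ | ⟨h1, h2⟩) <;> rw [h1, h2] <;> simp
    rw [e]
    rw [Finset.card_insert_of_notMem (by simp [Prod.ext_iff, hi0]),
      Finset.card_singleton]
  rw [h1, h2, h3]
  omega

lemma card_pairs (n : ℕ) (hn : 2 ≤ n) (d : ℕ) (i0 : Fin n) (hi0 : i0 ≠ i0.rev) :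
    (univ.filter fun p : (Fin d → Fin n) × (Fin d → Fin n) =>
        blk i0 p.1 = blk i0 p.2).card = (n + 2) ^ d := by
  classical
  have e1 : (univ.filter fun p : (Fin d → Fin n) × (Fin d → Fin n) =>
      blk i0 p.1 = blk i0 p.2)
      = univ.filter fun p : (Fin d → Fin n) × (Fin d → Fin n) =>
          ∀ j, rel i0 (p.1 j) (p.2 j) :=
    filter_congr (fun p _ => by rw [blk_eq_iff])
  rw [e1]
  rw [← Fintype.card_subtype]
  have e2a : {F : Fin d → Fin n × Fin n // ∀ j, rel i0 (F j).1 (F j).2}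
      ≃ {p : (Fin d → Fin n) × (Fin d → Fin n) // ∀ j, rel i0 (p.1 j) (p.2 j)} :=
    (Equiv.arrowProdEquivProdArrow (Fin d) (fun _ => Fin n) (fun _ => Fin n)).subtypeEquiv (fun F => Iff.rfl)
  have e2 : {p : (Fin d → Fin n) × (Fin d → Fin n) // ∀ j, rel i0 (p.1 j) (p.2 j)}
      ≃ ∀ _j : Fin d, {uv : Fin n × Fin n // rel i0 uv.1 uv.2} :=
    e2a.symm.trans (@Equiv.subtypePiEquivPi (Fin d) (fun _ => Fin n × Fin n)
      (fun (_j : Fin d) (uv : Fin n × Fin n) => rel i0 uv.1 uv.2))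
  rw [Fintype.card_congr e2, Fintype.card_pi]
  rw [Finset.prod_congr rfl (fun j _ =>
    Fintype.card_subtype (fun uv : Fin n × Fin n => rel i0 uv.1 uv.2))]
  rw [Finset.prod_const, card_rel n hn i0 hi0, Finset.card_univ, Fintype.card_fin]

lemma cut_bound {α : Type*} {n d : ℕ} (hn : 2 ≤ n) (w : Fin n → α) (i0 : Fin n)
    (hab : w i0 ≠ w i0.rev) (G : (Fin d → ℤ) → α) :
    4 * (univ.filter fun p : (Fin d → Fin n) × (Fin d → Fin n) =>
        blk i0 p.1 = blk i0 p.2 ∧ G (iota n p.1) = w i0 ∧ G (iota n p.2) = w i0.rev).card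
      ≤ (n + 2) ^ d := by
  classical
  have hi0 : i0 ≠ i0.rev := fun h => hab (congrArg w h)
  have hP := Finset.card_eq_sum_card_fiberwise
    (s := univ.filter fun p : (Fin d → Fin n) × (Fin d → Fin n) =>
        blk i0 p.1 = blk i0 p.2 ∧ G (iota n p.1) = w i0 ∧ G (iota n p.2) = w i0.rev)
    (t := (univ : Finset (Fin d → Option (Fin n)))) (f := fun p => blk i0 p.1)
    (fun x _ => mem_univ _)
  have hQ := Finset.card_eq_sum_card_fiberwise
    (s := univ.filter fun p : (Fin d → Fin n) × (Fin d → Fin n) =>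
        blk i0 p.1 = blk i0 p.2)
    (t := (univ : Finset (Fin d → Option (Fin n)))) (f := fun p => blk i0 p.1)
    (fun x _ => mem_univ _)
  have hQ' : ∑ β ∈ (univ : Finset (Fin d → Option (Fin n))),
      ((univ.filter fun p : (Fin d → Fin n) × (Fin d → Fin n) =>
        blk i0 p.1 = blk i0 p.2).filter fun p => blk i0 p.1 = β).card = (n + 2) ^ d := by
    rw [← hQ, card_pairs n hn d i0 hi0]
  rw [hP, ← hQ', Finset.mul_sum]
  apply Finset.sum_le_sum
  intro β _
  have ePf : ((univ.filter fun p : (Fin d → Fin n) × (Fin d → Fin n) =>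
      blk i0 p.1 = blk i0 p.2 ∧ G (iota n p.1) = w i0 ∧ G (iota n p.2) = w i0.rev).filter
        fun p => blk i0 p.1 = β)
      = (univ.filter fun x : Fin d → Fin n => blk i0 x = β ∧ G (iota n x) = w i0)
        ×ˢ (univ.filter fun x : Fin d → Fin n => blk i0 x = β ∧ G (iota n x) = w i0.rev) := by
    ext ⟨x, y⟩
    simp only [mem_filter, mem_univ, true_and, Finset.mem_product]
    constructor
    · rintro ⟨⟨hb, hx, hy⟩, hk⟩
      exact ⟨⟨hk, hx⟩, ⟨hb.symm.trans hk, hy⟩⟩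
    · rintro ⟨⟨hkx, hx⟩, ⟨hky, hy⟩⟩
      exact ⟨⟨hkx.trans hky.symm, hx, hy⟩, hkx⟩
  have eQf : ((univ.filter fun p : (Fin d → Fin n) × (Fin d → Fin n) =>
      blk i0 p.1 = blk i0 p.2).filter fun p => blk i0 p.1 = β)
      = (univ.filter fun x : Fin d → Fin n => blk i0 x = β)
        ×ˢ (univ.filter fun x : Fin d → Fin n => blk i0 x = β) := by
    ext ⟨x, y⟩
    simp only [mem_filter, mem_univ, true_and, Finset.mem_product]
    constructor
    · rintro ⟨hb, hk⟩
      exact ⟨hk, hb.symm.trans hk⟩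
    · rintro ⟨hkx, hky⟩
      exact ⟨hkx.trans hky.symm, hkx⟩
  rw [ePf, eQf, Finset.card_product, Finset.card_product]
  have hdisj : Disjoint
      (univ.filter fun x : Fin d → Fin n => blk i0 x = β ∧ G (iota n x) = w i0)
      (univ.filter fun x : Fin d → Fin n => blk i0 x = β ∧ G (iota n x) = w i0.rev) := by
    rw [disjoint_left]
    intro x hx hx'
    rw [mem_filter] at hx hx'
    exact hab (hx.2.2.symm.trans hx'.2.2)
  have hsum : (univ.filter fun x : Fin d → Fin n =>
        blk i0 x = β ∧ G (iota n x) = w i0).card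
      + (univ.filter fun x : Fin d → Fin n =>
        blk i0 x = β ∧ G (iota n x) = w i0.rev).card
      ≤ (univ.filter fun x : Fin d → Fin n => blk i0 x = β).card := by
    rw [← Finset.card_union_of_disjoint hdisj]
    apply Finset.card_le_card
    intro x hx
    rw [Finset.mem_union, mem_filter, mem_filter] at hx
    rw [mem_filter]
    rcases hx with ⟨h1, h2, -⟩ | ⟨h1, h2, -⟩ <;> exact ⟨h1, h2⟩
  have key : ∀ a b c : ℕ, a + b ≤ c → 4 * (a * b) ≤ c * c := by
    intro a b c h
    zify at h ⊢
    nlinarith [sq_nonneg ((a : ℤ) - b), h]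
  exact key _ _ _ hsum

lemma canon_neg {d : ℕ} {v v' : Fin d → ℤ} (h : ∀ j, v' j = -v j)
    (hv : ∃ j, v j = 1 ∧ ∀ j' < j, v j' = 0)
    (hv' : ∃ j, v' j = 1 ∧ ∀ j' < j, v' j' = 0) : False := by
  obtain ⟨j1, h1, h1'⟩ := hv
  obtain ⟨j2, h2, h2'⟩ := hv'
  rcases lt_trichotomy j1 j2 with hlt | heq | hgt
  · have := h2' j1 hlt
    have := h j1
    omega
  · rw [heq] at h1
    have := h j2
    omega
  · have := h1' j2 hgt
    have := h j2
    omega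

lemma blk_zeta {n d : ℕ} (hn : 2 ≤ n) {p v : Fin d → ℤ} (hcl : IsCanonLine n d p v)
    (i0 : Fin n) :
    blk i0 (zeta n (by omega) (fun j => p j + ((i0 : ℕ) : ℤ) * v j))
      = blk i0 (zeta n (by omega) (fun j => p j + ((i0.rev : ℕ) : ℤ) * v j)) := by
  obtain ⟨hv, -, hb⟩ := hcl
  have ha : (i0 : ℕ) < n := i0.isLt
  have hrev : (i0.rev : ℕ) = n - ((i0 : ℕ) + 1) := Fin.val_rev i0
  have hbrev : (i0.rev : ℕ) < n := i0.rev.isLt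
  funext j
  have h0 := hb 0 (by omega) j
  have h1 := hb (n - 1) (by omega) j
  push_cast at h0 h1
  rcases hv j with h | h | h
  · -- v j = -1, p j = n
    have hp : p j = n := by rw [h] at h0 h1; omega
    have hx : (zeta n (show (0:ℕ) < n by omega) (fun j => p j + ((i0 : ℕ) : ℤ) * v j)) j
        = i0.rev := by
      apply Fin.ext
      show min (p j + ((i0 : ℕ) : ℤ) * v j - 1).toNat (n - 1) = (i0.rev : ℕ)
      rw [h, hp, hrev]
      omega
    have hy : (zeta n (show (0:ℕ) < n by omega) (fun j => p j + ((i0.rev : ℕ) : ℤ) * v j)) j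
        = i0 := by
      apply Fin.ext
      show min (p j + ((i0.rev : ℕ) : ℤ) * v j - 1).toNat (n - 1) = (i0 : ℕ)
      rw [h, hp, hrev]
      omega
    unfold blk
    rw [if_pos (Or.inr hx), if_pos (Or.inl hy)]
  · -- v j = 0
    unfold blk zeta
    simp only [h, mul_zero, add_zero]
  · -- v j = 1, p j = 1
    have hp : p j = 1 := by rw [h] at h0 h1; omega
    have hx : (zeta n (show (0:ℕ) < n by omega) (fun j => p j + ((i0 : ℕ) : ℤ) * v j)) j
        = i0 := by
      apply Fin.ext
      show min (p j + ((i0 : ℕ) : ℤ) * v j - 1).toNat (n - 1) = (i0 : ℕ)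
      rw [h, hp]
      omega
    have hy : (zeta n (show (0:ℕ) < n by omega) (fun j => p j + ((i0.rev : ℕ) : ℤ) * v j)) j
        = i0.rev := by
      apply Fin.ext
      show min (p j + ((i0.rev : ℕ) : ℤ) * v j - 1).toNat (n - 1) = (i0.rev : ℕ)
      rw [h, hp, hrev]
      omega
    unfold blk
    rw [if_pos (Or.inl hx), if_pos (Or.inr hy)]

lemma count_upper {α : Type*} {n d : ℕ} (hn : 2 ≤ n) (w : Fin n → α) (i0 : Fin n)
    (hab : w i0 ≠ w i0.rev) (G : (Fin d → ℤ) → α) :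
    4 * count d w G ≤ (n + 2) ^ d := by
  classical
  have hn0 : 0 < n := by omega
  have hi0 : i0 ≠ i0.rev := fun h => hab (congrArg w h)
  set S := {pv : (Fin d → ℤ) × (Fin d → ℤ) |
    IsCanonLine n d pv.1 pv.2 ∧ lineC w G pv.1 pv.2} with hS
  set P2 : Finset ((Fin d → Fin n) × (Fin d → Fin n)) := univ.filter fun p =>
      blk i0 p.1 = blk i0 p.2 ∧ G (iota n p.1) = w i0 ∧ G (iota n p.2) = w i0.rev with hP2
  suffices h : count d w G ≤ P2.card by
    have h4 := cut_bound hn w i0 hab G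
    rw [← hP2] at h4
    omega
  set Φ : (Fin d → ℤ) × (Fin d → ℤ) → ((Fin d → Fin n) × (Fin d → Fin n)) := fun pv =>
    if (∀ i : Fin n, G (fun j => pv.1 j + ((i : ℕ) : ℤ) * pv.2 j) = w i)
    then (zeta n hn0 (fun j => pv.1 j + ((i0 : ℕ) : ℤ) * pv.2 j),
          zeta n hn0 (fun j => pv.1 j + ((i0.rev : ℕ) : ℤ) * pv.2 j))
    else (zeta n hn0 (fun j => pv.1 j + ((i0.rev : ℕ) : ℤ) * pv.2 j),
          zeta n hn0 (fun j => pv.1 j + ((i0 : ℕ) : ℤ) * pv.2 j)) with hΦ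
  have hiz : ∀ pv ∈ S, ∀ i : Fin n,
      iota n (zeta n hn0 (fun j => pv.1 j + ((i : ℕ) : ℤ) * pv.2 j))
        = (fun j => pv.1 j + ((i : ℕ) : ℤ) * pv.2 j) := by
    rintro ⟨p, v⟩ hpv i
    apply iota_zeta
    intro j
    exact hpv.1.2.2 (i : ℕ) i.isLt j
  have hmem : ∀ pv ∈ S, Φ pv ∈ P2 := by
    rintro ⟨p, v⟩ hpv
    obtain ⟨hcl, hlc⟩ := hpv
    rw [hP2, mem_filter]
    refine ⟨mem_univ _, ?_⟩
    rw [hΦ]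
    dsimp only
    by_cases hfwd : (∀ i : Fin n, G (fun j => p j + ((i : ℕ) : ℤ) * v j) = w i)
    · rw [if_pos hfwd]
      refine ⟨blk_zeta hn hcl i0, ?_, ?_⟩
      · rw [hiz (p, v) ⟨hcl, hlc⟩ i0]
        exact hfwd i0
      · rw [hiz (p, v) ⟨hcl, hlc⟩ i0.rev]
        exact hfwd i0.rev
    · rw [if_neg hfwd]
      have hbwd : ∀ i : Fin n, G (fun j => p j + ((i : ℕ) : ℤ) * v j) = w i.rev := by
        rcases hlc with h | h
        · exact absurd h hfwd
        · exact h
      refine ⟨(blk_zeta hn hcl i0).symm, ?_, ?_⟩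
      · rw [hiz (p, v) ⟨hcl, hlc⟩ i0.rev]
        rw [hbwd i0.rev, Fin.rev_rev]
      · rw [hiz (p, v) ⟨hcl, hlc⟩ i0]
        exact hbwd i0
  have hΔ : ((i0.rev : ℕ) : ℤ) ≠ ((i0 : ℕ) : ℤ) := by
    intro h
    apply hi0
    apply Fin.ext
    omega
  have hinj : Set.InjOn Φ S := by
    rintro ⟨p, v⟩ hpv ⟨p', v'⟩ hpv' heq
    have hz : ∀ (i i' : Fin n),
        zeta n hn0 (fun j => p j + ((i : ℕ) : ℤ) * v j)
          = zeta n hn0 (fun j => p' j + ((i' : ℕ) : ℤ) * v' j) →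
        ∀ j, p j + ((i : ℕ) : ℤ) * v j = p' j + ((i' : ℕ) : ℤ) * v' j := by
      intro i i' he j
      have e1 := hiz (p, v) hpv i
      have e2 := hiz (p', v') hpv' i'
      have : (fun j => p j + ((i : ℕ) : ℤ) * v j)
          = (fun j => p' j + ((i' : ℕ) : ℤ) * v' j) := by
        rw [← e1, ← e2, he]
      exact congrFun this j
    rw [hΦ] at heq
    dsimp only at heq
    by_cases hf : (∀ i : Fin n, G (fun j => p j + ((i : ℕ) : ℤ) * v j) = w i) <;>
      by_cases hf' : (∀ i : Fin n, G (fun j => p' j + ((i : ℕ) : ℤ) * v' j) = w i)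
    · rw [if_pos hf, if_pos hf'] at heq
      have e1 := hz i0 i0 (congrArg Prod.fst heq)
      have e2 := hz i0.rev i0.rev (congrArg Prod.snd heq)
      have hvv : v = v' := by
        funext j
        have a1 := e1 j
        have a2 := e2 j
        have : (((i0.rev : ℕ) : ℤ) - ((i0 : ℕ) : ℤ)) * v j
            = (((i0.rev : ℕ) : ℤ) - ((i0 : ℕ) : ℤ)) * v' j := by ring_nf; linarith [a1, a2]
        exact mul_left_cancel₀ (sub_ne_zero.2 hΔ) this
      have hpp : p = p' := by
        funext j
        have a1 := e1 j
        rw [hvv] at a1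
        linarith [a1]
      rw [Prod.ext_iff]
      exact ⟨hpp, hvv⟩
    · rw [if_pos hf, if_neg hf'] at heq
      exfalso
      have e1 := hz i0 i0.rev (congrArg Prod.fst heq)
      have e2 := hz i0.rev i0 (congrArg Prod.snd heq)
      have hvv : ∀ j, v' j = - v j := by
        intro j
        have a1 := e1 j
        have a2 := e2 j
        have : (((i0.rev : ℕ) : ℤ) - ((i0 : ℕ) : ℤ)) * v j
            = (((i0 : ℕ) : ℤ) - ((i0.rev : ℕ) : ℤ)) * v' j := by ring_nf; linarith [a1, a2]
        have h2 : (((i0.rev : ℕ) : ℤ) - ((i0 : ℕ) : ℤ)) * v j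
            = (((i0.rev : ℕ) : ℤ) - ((i0 : ℕ) : ℤ)) * (- v' j) := by linarith [this]
        have := mul_left_cancel₀ (sub_ne_zero.2 hΔ) h2
        omega
      exact canon_neg hvv hpv.1.2.1 hpv'.1.2.1
    · rw [if_neg hf, if_pos hf'] at heq
      exfalso
      have e1 := hz i0.rev i0 (congrArg Prod.fst heq)
      have e2 := hz i0 i0.rev (congrArg Prod.snd heq)
      have hvv : ∀ j, v' j = - v j := by
        intro j
        have a1 := e1 j
        have a2 := e2 j
        have h2 : (((i0.rev : ℕ) : ℤ) - ((i0 : ℕ) : ℤ)) * v j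
            = (((i0.rev : ℕ) : ℤ) - ((i0 : ℕ) : ℤ)) * (- v' j) := by ring_nf; linarith [a1, a2]
        have := mul_left_cancel₀ (sub_ne_zero.2 hΔ) h2
        omega
      exact canon_neg hvv hpv.1.2.1 hpv'.1.2.1
    · rw [if_neg hf, if_neg hf'] at heq
      have e1 := hz i0.rev i0.rev (congrArg Prod.fst heq)
      have e2 := hz i0 i0 (congrArg Prod.snd heq)
      have hvv : v = v' := by
        funext j
        have a1 := e1 j
        have a2 := e2 j
        have : (((i0.rev : ℕ) : ℤ) - ((i0 : ℕ) : ℤ)) * v j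
            = (((i0.rev : ℕ) : ℤ) - ((i0 : ℕ) : ℤ)) * v' j := by ring_nf; linarith [a1, a2]
        exact mul_left_cancel₀ (sub_ne_zero.2 hΔ) this
      have hpp : p = p' := by
        funext j
        have a1 := e2 j
        rw [hvv] at a1
        linarith [a1]
      rw [Prod.ext_iff]
      exact ⟨hpp, hvv⟩
  calc count d w G = S.ncard := rfl
    _ = (Φ '' S).ncard := (Set.ncard_image_of_injOn hinj).symm
    _ ≤ (↑P2 : Set ((Fin d → Fin n) × (Fin d → Fin n))).ncard := by
        apply Set.ncard_le_ncard _ (Finset.finite_toSet P2)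
        rintro x ⟨pv, hpv, rfl⟩
        exact hmem pv hpv
    _ = P2.card := Set.ncard_coe_finset P2

/-! ### bounds on fword -/

lemma fword_le {α : Type*} {n d : ℕ} (hn : 2 ≤ n) (w : Fin n → α) (i0 : Fin n)
    (hab : w i0 ≠ w i0.rev) : 4 * fword w d ≤ (n + 2) ^ d := by
  have hub : fword w d ≤ (n + 2) ^ d / 4 := by
    apply csSup_le'
    rintro m ⟨G, rfl⟩
    rw [Nat.le_div_iff_mul_le (by norm_num)]
    rw [Nat.mul_comm]
    exact count_upper hn w i0 hab G
  calc 4 * fword w d ≤ 4 * ((n + 2) ^ d / 4) := by omega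
    _ ≤ (n + 2) ^ d := by omega

lemma fword_ge {α : Type*} {n d : ℕ} (hn : 2 ≤ n) (w : Fin n → α) (i0 : Fin n)
    (hab : w i0 ≠ w i0.rev) (G : (Fin d → ℤ) → α) : count d w G ≤ fword w d := by
  apply le_csSup
  · refine ⟨(n + 2) ^ d, ?_⟩
    rintro m ⟨G', rfl⟩
    have := count_upper hn w i0 hab G'
    omega
  · exact ⟨G, rfl⟩

lemma fword_lower {α : Type*} {n d : ℕ} (hn : 2 ≤ n) (w : Fin n → α) (i0 : Fin n)
    (hab : w i0 ≠ w i0.rev) :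
    ((n : ℝ) + 2) ^ d - ((n : ℝ) - 2) ^ d
        - 2 * (n : ℝ) ^ 2 * ((n : ℝ) + 2 - 79 / 400) ^ d
      ≤ 4 * (fword w d : ℝ) := by
  classical
  have hA : (univ.filter fun t : Fin d → Cat n => Good n t ∧ Canon t).card ≤ fword w d :=
    le_trans (count_lower hn w) (fword_ge hn w i0 hab _)
  have h2A := card_good_twice n d
  have hodd := card_odd_types n d
  set pairs : Finset (ℕ × ℕ) :=
    (Finset.Icc 1 n ×ˢ Finset.Icc 1 n).filter (fun q => q.1 ≠ q.2) with hpairs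
  have hsubset : (univ.filter fun t : Fin d → Cat n => Odd (cU t + cD t))
      ⊆ (univ.filter fun t : Fin d → Cat n => Good n t)
        ∪ pairs.biUnion (fun q =>
            univ.filter fun t : Fin d → Cat n =>
              cU t + cD t + 2 * cC q.1 t ≤ 2 * cC q.2 t) := by
    intro t ht
    rw [mem_filter] at ht
    by_cases hg : Good n t
    · exact Finset.mem_union_left _ (mem_filter.2 ⟨mem_univ _, hg⟩)
    · apply Finset.mem_union_right
      rw [Finset.mem_biUnion]
      unfold Good at hg
      push_neg at hg
      obtain ⟨m, hm, m', hm', hne, hbad⟩ := hg ht.2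
      refine ⟨(m, m'), ?_, mem_filter.2 ⟨mem_univ _, hbad⟩⟩
      rw [hpairs, mem_filter, Finset.mem_product]
      exact ⟨⟨hm, hm'⟩, hne⟩
  have h1 : (univ.filter fun t : Fin d → Cat n => Odd (cU t + cD t)).card
      ≤ (univ.filter fun t : Fin d → Cat n => Good n t).card
        + ∑ q ∈ pairs, (univ.filter fun t : Fin d → Cat n =>
            cU t + cD t + 2 * cC q.1 t ≤ 2 * cC q.2 t).card := by
    calc (univ.filter fun t : Fin d → Cat n => Odd (cU t + cD t)).card
        ≤ ((univ.filter fun t : Fin d → Cat n => Good n t)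
            ∪ pairs.biUnion (fun q =>
              univ.filter fun t : Fin d → Cat n =>
                cU t + cD t + 2 * cC q.1 t ≤ 2 * cC q.2 t)).card :=
          Finset.card_le_card hsubset
      _ ≤ (univ.filter fun t : Fin d → Cat n => Good n t).card
            + (pairs.biUnion (fun q =>
              univ.filter fun t : Fin d → Cat n =>
                cU t + cD t + 2 * cC q.1 t ≤ 2 * cC q.2 t)).card := Finset.card_union_le _ _
      _ ≤ _ := by
          apply Nat.add_le_add_left
          exact Finset.card_biUnion_le
  have hterm : ∀ q ∈ pairs, ((univ.filter fun t : Fin d → Cat n =>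
      cU t + cD t + 2 * cC q.1 t ≤ 2 * cC q.2 t).card : ℝ)
      ≤ ((n : ℝ) + 2 - 79 / 400) ^ d := by
    intro q hq
    rw [hpairs, mem_filter, Finset.mem_product, Finset.mem_Icc, Finset.mem_Icc] at hq
    exact card_bad n d hq.1.1.1 hq.1.1.2 hq.1.2.1 hq.2
  have hcard : (pairs.card : ℝ) ≤ (n : ℝ) ^ 2 := by
    have h1' : pairs.card ≤ n * n := by
      have h2' := Finset.card_filter_le (Finset.Icc 1 n ×ˢ Finset.Icc 1 n)
        (fun q : ℕ × ℕ => q.1 ≠ q.2)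
      rw [Finset.card_product, Nat.card_Icc] at h2'
      calc pairs.card ≤ (n + 1 - 1) * (n + 1 - 1) := h2'
        _ = n * n := by rw [Nat.add_sub_cancel]
    calc (pairs.card : ℝ) ≤ ((n * n : ℕ) : ℝ) := by exact_mod_cast h1'
      _ = (n : ℝ) ^ 2 := by push_cast; ring
  have hbadsum : (∑ q ∈ pairs, ((univ.filter fun t : Fin d → Cat n =>
        cU t + cD t + 2 * cC q.1 t ≤ 2 * cC q.2 t).card : ℝ))
      ≤ (n : ℝ) ^ 2 * ((n : ℝ) + 2 - 79 / 400) ^ d := by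
    calc (∑ q ∈ pairs, ((univ.filter fun t : Fin d → Cat n =>
          cU t + cD t + 2 * cC q.1 t ≤ 2 * cC q.2 t).card : ℝ))
        ≤ ∑ _q ∈ pairs, ((n : ℝ) + 2 - 79 / 400) ^ d := Finset.sum_le_sum hterm
      _ = pairs.card * ((n : ℝ) + 2 - 79 / 400) ^ d := by
          rw [Finset.sum_const, nsmul_eq_mul]
      _ ≤ (n : ℝ) ^ 2 * ((n : ℝ) + 2 - 79 / 400) ^ d := by
          apply mul_le_mul_of_nonneg_right hcard
          apply pow_nonneg
          have : (0 : ℝ) ≤ (n : ℝ) := Nat.cast_nonneg n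
          linarith
  -- cast everything to ℝ and combine
  have c1 : ((univ.filter fun t : Fin d → Cat n => Odd (cU t + cD t)).card : ℝ)
      ≤ ((univ.filter fun t : Fin d → Cat n => Good n t).card : ℝ)
        + (n : ℝ) ^ 2 * ((n : ℝ) + 2 - 79 / 400) ^ d := by
    have hcast : ((univ.filter fun t : Fin d → Cat n => Odd (cU t + cD t)).card : ℝ)
        ≤ ((univ.filter fun t : Fin d → Cat n => Good n t).card : ℝ)
          + ∑ q ∈ pairs, ((univ.filter fun t : Fin d → Cat n =>
              cU t + cD t + 2 * cC q.1 t ≤ 2 * cC q.2 t).card : ℝ) := by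
      exact_mod_cast h1
    linarith [hbadsum]
  have c2 : 2 * ((univ.filter fun t : Fin d → Cat n => Odd (cU t + cD t)).card : ℝ)
      = ((n : ℝ) + 2) ^ d - ((n : ℝ) - 2) ^ d := by
    exact_mod_cast congrArg (fun z : ℤ => (z : ℝ)) hodd
  have c3 : ((univ.filter fun t : Fin d → Cat n => Good n t).card : ℝ)
      = 2 * ((univ.filter fun t : Fin d → Cat n => Good n t ∧ Canon t).card : ℝ) := by
    exact_mod_cast congrArg (fun z : ℕ => (z : ℝ)) h2A
  have c4 : ((univ.filter fun t : Fin d → Cat n => Good n t ∧ Canon t).card : ℝ)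
      ≤ (fword w d : ℝ) := by exact_mod_cast hA
  linarith [c1, c2, c3, c4]

open Filter in
theorem nonpalindrome_asymptotics' {α : Type*} {n : ℕ} (hn : 2 ≤ n) (w : Fin n → α)
    (hnp : ∃ i, w i ≠ w i.rev) :
    Tendsto (fun d : ℕ => (fword w d : ℝ) / (n + 2) ^ d) atTop (nhds (1 / 4)) := by
  obtain ⟨i0, hab⟩ := hnp
  have hn2 : (0 : ℝ) < (n : ℝ) + 2 := by positivity
  have hXpos : ∀ d : ℕ, (0 : ℝ) < ((n : ℝ) + 2) ^ d := fun d => pow_pos hn2 d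
  have hup : ∀ d : ℕ, (fword w d : ℝ) / ((n : ℝ) + 2) ^ d ≤ 1 / 4 := by
    intro d
    rw [div_le_iff₀ (hXpos d)]
    have h := fword_le (d := d) hn w i0 hab
    have hc : (4 : ℝ) * (fword w d : ℝ) ≤ ((n : ℝ) + 2) ^ d := by
      have h2 : ((4 * fword w d : ℕ) : ℝ) ≤ (((n + 2) ^ d : ℕ) : ℝ) := by exact_mod_cast h
      push_cast at h2
      linarith
    linarith
  set ρ1 : ℝ := ((n : ℝ) - 2) / ((n : ℝ) + 2) with hρ1
  set ρ2 : ℝ := ((n : ℝ) + 2 - 79 / 400) / ((n : ℝ) + 2) with hρ2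
  set L : ℕ → ℝ := fun d => (1 - ρ1 ^ d - 2 * (n : ℝ) ^ 2 * ρ2 ^ d) / 4 with hL
  have hn0 : (0 : ℝ) ≤ (n : ℝ) - 2 := by
    have h2 : (2 : ℝ) ≤ (n : ℝ) := by exact_mod_cast hn
    linarith
  have hB0 : (0 : ℝ) ≤ (n : ℝ) + 2 - 79 / 400 := by
    have h2 : (0 : ℝ) ≤ (n : ℝ) := Nat.cast_nonneg n
    linarith
  have hlo : ∀ d : ℕ, L d ≤ (fword w d : ℝ) / ((n : ℝ) + 2) ^ d := by
    intro d
    rw [hL]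
    rw [div_le_div_iff₀ (by norm_num) (hXpos d)]
    have e1 : ρ1 ^ d * ((n : ℝ) + 2) ^ d = ((n : ℝ) - 2) ^ d := by
      rw [hρ1, div_pow, div_mul_cancel₀]
      exact pow_ne_zero d hn2.ne'
    have e2 : ρ2 ^ d * ((n : ℝ) + 2) ^ d = ((n : ℝ) + 2 - 79 / 400) ^ d := by
      rw [hρ2, div_pow, div_mul_cancel₀]
      exact pow_ne_zero d hn2.ne'
    have h := fword_lower (d := d) hn w i0 hab
    calc (1 - ρ1 ^ d - 2 * (n : ℝ) ^ 2 * ρ2 ^ d) * ((n : ℝ) + 2) ^ d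
        = ((n : ℝ) + 2) ^ d - ρ1 ^ d * ((n : ℝ) + 2) ^ d
          - 2 * (n : ℝ) ^ 2 * (ρ2 ^ d * ((n : ℝ) + 2) ^ d) := by ring
      _ = ((n : ℝ) + 2) ^ d - ((n : ℝ) - 2) ^ d
          - 2 * (n : ℝ) ^ 2 * ((n : ℝ) + 2 - 79 / 400) ^ d := by rw [e1, e2]
      _ ≤ 4 * (fword w d : ℝ) := h
      _ = (fword w d : ℝ) * 4 := by ring
  have hLlim : Tendsto L atTop (nhds (1 / 4)) := by
    have t1 : Tendsto (fun d : ℕ => ρ1 ^ d) atTop (nhds 0) := by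
      apply tendsto_pow_atTop_nhds_zero_of_lt_one
      · exact div_nonneg hn0 hn2.le
      · rw [hρ1, div_lt_one hn2]; linarith
    have t2 : Tendsto (fun d : ℕ => ρ2 ^ d) atTop (nhds 0) := by
      apply tendsto_pow_atTop_nhds_zero_of_lt_one
      · exact div_nonneg hB0 hn2.le
      · rw [hρ2, div_lt_one hn2]; norm_num
    have t3 : Tendsto (fun d : ℕ => (1 - ρ1 ^ d - 2 * (n : ℝ) ^ 2 * ρ2 ^ d) / 4) atTop
        (nhds ((1 - 0 - 2 * (n : ℝ) ^ 2 * 0) / 4)) := by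
      apply Tendsto.div_const
      exact (tendsto_const_nhds.sub t1).sub (t2.const_mul _)
    rw [hL]
    convert t3 using 2
    norm_num
  have hfinal := tendsto_of_tendsto_of_tendsto_of_le_of_le hLlim tendsto_const_nhds hlo hup
  convert hfinal using 2


open Filter in
theorem nonpalindrome_asymptotics {n : ℕ} (hn : 2 ≤ n) (w : Fin n → α)
    (hnp : ∃ i, w i ≠ w i.rev) :
    Tendsto (fun d : ℕ => (fword w d : ℝ) / (n + 2) ^ d) atTop (nhds (1 / 4)) := by
  exact nonpalindrome_asymptotics' hn w hnp

end WordGridHD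
end
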